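/- Nonnegativity and identity of indiscernibles for the energy distance: Let X and Y be integrable real random variables, with X′ an independent copy of X and Y′ an independent copy of Y, and (X, X′) independent of (Y, Y′). Then the energy distance 2 E|X − Y| − E|X − X′| − E|Y − Y′| is nonnegative, and it equals zero if and only if X and Y have the same distribution. (Equivalently, the CRPS is a strictly proper scoring rule on probability measures on ℝ with finite first moment.) -/

import Mathlib

open MeasureTheory ProbabilityTheory

noncomputable section

open Set Filter Topology
open scoped ENNReal

namespace EnergyDistanceAux

def eFun (ν ρ : Measure ℝ) (t : ℝ) : ℝ :=
  (ν (Iic t) * ρ (Ioi t) + ρ (Iic t) * ν (Ioi t)).toReal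

lemma eFun_ne_top (ν ρ : Measure ℝ) [IsFiniteMeasure ν] [IsFiniteMeasure ρ] (t : ℝ) :
    ν (Iic t) * ρ (Ioi t) + ρ (Iic t) * ν (Ioi t) ≠ ∞ :=
  ENNReal.add_ne_top.2 ⟨ENNReal.mul_ne_top (measure_ne_top ν _) (measure_ne_top ρ _),
    ENNReal.mul_ne_top (measure_ne_top ρ _) (measure_ne_top ν _)⟩

lemma ofReal_eFun (ν ρ : Measure ℝ) [IsFiniteMeasure ν] [IsFiniteMeasure ρ] (t : ℝ) :
    ENNReal.ofReal (eFun ν ρ t) = ν (Iic t) * ρ (Ioi t) + ρ (Iic t) * ν (Ioi t) :=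
  ENNReal.ofReal_toReal (eFun_ne_top ν ρ t)

lemma measurable_eFun (ν ρ : Measure ℝ) : Measurable (eFun ν ρ) := by
  have h1 : ∀ (κ : Measure ℝ), Measurable fun t => κ (Iic t) := fun κ =>
    Monotone.measurable (fun a b hab => measure_mono (Iic_subset_Iic.2 hab))
  have h2 : ∀ (κ : Measure ℝ), Measurable fun t => κ (Ioi t) := fun κ =>
    Antitone.measurable (fun a b hab => measure_mono (Ioi_subset_Ioi hab))
  exact (((h1 ν).mul (h2 ρ)).add ((h1 ρ).mul (h2 ν))).ennreal_toReal

lemma toReal_Ioi (ν : Measure ℝ) [IsProbabilityMeasure ν] (t : ℝ) :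
    (ν (Ioi t)).toReal = 1 - (ν (Iic t)).toReal := by
  have h : ν (Ioi t) = 1 - ν (Iic t) := by
    rw [← Set.compl_Iic]
    exact prob_compl_eq_one_sub measurableSet_Iic
  rw [h, ENNReal.toReal_sub_of_le prob_le_one ENNReal.one_ne_top, ENNReal.toReal_one]

lemma eFun_eq (ν ρ : Measure ℝ) [IsProbabilityMeasure ν] [IsProbabilityMeasure ρ] (t : ℝ) :
    eFun ν ρ t = (ν (Iic t)).toReal * (1 - (ρ (Iic t)).toReal)
      + (ρ (Iic t)).toReal * (1 - (ν (Iic t)).toReal) := by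
  rw [eFun, ENNReal.toReal_add (ENNReal.mul_ne_top (measure_ne_top ν _) (measure_ne_top ρ _))
    (ENNReal.mul_ne_top (measure_ne_top ρ _) (measure_ne_top ν _)),
    ENNReal.toReal_mul, ENNReal.toReal_mul, toReal_Ioi, toReal_Ioi]

lemma eFun_nonneg (ν ρ : Measure ℝ) (t : ℝ) : 0 ≤ eFun ν ρ t := ENNReal.toReal_nonneg

lemma lintegral_abs_sub_indep {Ω : Type*} [MeasurableSpace Ω] (μ : Measure Ω)
    [IsProbabilityMeasure μ] {U V : Ω → ℝ} (hU : Measurable U) (hV : Measurable V)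
    (hind : IndepFun U V μ) :
    ∫⁻ ω, ENNReal.ofReal |U ω - V ω| ∂μ
      = ∫⁻ t, μ (U ⁻¹' Set.Iic t) * μ (V ⁻¹' Set.Ioi t)
          + μ (V ⁻¹' Set.Iic t) * μ (U ⁻¹' Set.Ioi t) := by
  set A : Set (Ω × ℝ) := {p | (U p.1 ≤ p.2 ∧ p.2 < V p.1) ∨ (V p.1 ≤ p.2 ∧ p.2 < U p.1)}
    with hA
  have hAm : MeasurableSet A := by
    apply MeasurableSet.union
    · exact (measurableSet_le (hU.comp measurable_fst) measurable_snd).inter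
        (measurableSet_lt measurable_snd (hV.comp measurable_fst))
    · exact (measurableSet_le (hV.comp measurable_fst) measurable_snd).inter
        (measurableSet_lt measurable_snd (hU.comp measurable_fst))
  have h1 : ∀ ω, ∫⁻ t, A.indicator (1 : Ω × ℝ → ℝ≥0∞) (ω, t) ∂volume
      = ENNReal.ofReal |U ω - V ω| := by
    intro ω
    have hset : ∀ t, A.indicator (1 : Ω × ℝ → ℝ≥0∞) (ω, t)
        = (Ico (U ω) (V ω) ∪ Ico (V ω) (U ω)).indicator (1 : ℝ → ℝ≥0∞) t := by
      intro t
      simp only [indicator, Pi.one_apply, hA, mem_setOf_eq, mem_union, mem_Ico]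
    simp_rw [hset]
    rw [lintegral_indicator_one (measurableSet_Ico.union measurableSet_Ico)]
    rcases le_total (U ω) (V ω) with h | h
    · rw [Ico_eq_empty (not_lt.2 h), union_empty, Real.volume_Ico,
        abs_sub_comm, abs_of_nonneg (sub_nonneg.2 h)]
    · rw [Ico_eq_empty (not_lt.2 h), empty_union, Real.volume_Ico,
        abs_of_nonneg (sub_nonneg.2 h)]
  have h2 : ∀ t, ∫⁻ ω, A.indicator (1 : Ω × ℝ → ℝ≥0∞) (ω, t) ∂μ
      = μ (U ⁻¹' Set.Iic t) * μ (V ⁻¹' Set.Ioi t)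
        + μ (V ⁻¹' Set.Iic t) * μ (U ⁻¹' Set.Ioi t) := by
    intro t
    have hset : ∀ ω, A.indicator (1 : Ω × ℝ → ℝ≥0∞) (ω, t)
        = ((U ⁻¹' Iic t ∩ V ⁻¹' Ioi t) ∪ (V ⁻¹' Iic t ∩ U ⁻¹' Ioi t)).indicator
            (1 : Ω → ℝ≥0∞) ω := by
      intro ω
      simp only [indicator, Pi.one_apply, hA, mem_setOf_eq, mem_union, mem_inter_iff,
        mem_preimage, mem_Iic, mem_Ioi]
    simp_rw [hset]
    have hd : Disjoint (U ⁻¹' Iic t ∩ V ⁻¹' Ioi t) (V ⁻¹' Iic t ∩ U ⁻¹' Ioi t) :=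
      Set.disjoint_left.2 fun ω h1 h2 => absurd (lt_of_lt_of_le h2.2 h1.1) (lt_irrefl t)
    have hm1 : MeasurableSet (U ⁻¹' Iic t ∩ V ⁻¹' Ioi t) :=
      (hU measurableSet_Iic).inter (hV measurableSet_Ioi)
    have hm2 : MeasurableSet (V ⁻¹' Iic t ∩ U ⁻¹' Ioi t) :=
      (hV measurableSet_Iic).inter (hU measurableSet_Ioi)
    rw [lintegral_indicator_one (hm1.union hm2), measure_union hd hm2,
      hind.measure_inter_preimage_eq_mul _ _ measurableSet_Iic measurableSet_Ioi,
      hind.symm.measure_inter_preimage_eq_mul _ _ measurableSet_Iic measurableSet_Ioi]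
  calc ∫⁻ ω, ENNReal.ofReal |U ω - V ω| ∂μ
      = ∫⁻ ω, ∫⁻ t, A.indicator (1 : Ω × ℝ → ℝ≥0∞) (ω, t) ∂volume ∂μ :=
        lintegral_congr fun ω => (h1 ω).symm
    _ = ∫⁻ t, ∫⁻ ω, A.indicator (1 : Ω × ℝ → ℝ≥0∞) (ω, t) ∂μ ∂volume :=
        lintegral_lintegral_swap ((measurable_one.indicator hAm).aemeasurable)
    _ = _ := lintegral_congr fun t => h2 t

lemma step2 {Ω : Type*} [MeasurableSpace Ω] (μ : Measure Ω) [IsProbabilityMeasure μ]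
    {U V : Ω → ℝ} (hU : Measurable U) (hV : Measurable V) (hind : IndepFun U V μ)
    (hUV : Integrable (fun ω => |U ω - V ω|) μ)
    (ν ρ : Measure ℝ) [IsProbabilityMeasure ν] [IsProbabilityMeasure ρ]
    (hν : μ.map U = ν) (hρ : μ.map V = ρ) :
    (∫ ω, |U ω - V ω| ∂μ) = ∫ t, eFun ν ρ t ∧ Integrable (eFun ν ρ) volume := by
  have hpre : ∀ t, μ (U ⁻¹' Iic t) = ν (Iic t) := fun t => by
    rw [← hν, Measure.map_apply hU measurableSet_Iic]
  have hpre2 : ∀ t, μ (U ⁻¹' Ioi t) = ν (Ioi t) := fun t => by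
    rw [← hν, Measure.map_apply hU measurableSet_Ioi]
  have hpre3 : ∀ t, μ (V ⁻¹' Iic t) = ρ (Iic t) := fun t => by
    rw [← hρ, Measure.map_apply hV measurableSet_Iic]
  have hpre4 : ∀ t, μ (V ⁻¹' Ioi t) = ρ (Ioi t) := fun t => by
    rw [← hρ, Measure.map_apply hV measurableSet_Ioi]
  have hkey : ∫⁻ ω, ENNReal.ofReal |U ω - V ω| ∂μ = ∫⁻ t, ENNReal.ofReal (eFun ν ρ t) := by
    rw [lintegral_abs_sub_indep μ hU hV hind]
    exact lintegral_congr fun t => by rw [ofReal_eFun, hpre, hpre2, hpre3, hpre4]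
  have hfin : ∫⁻ ω, ENNReal.ofReal |U ω - V ω| ∂μ ≠ ∞ := by
    have h := hUV.hasFiniteIntegral
    rw [hasFiniteIntegral_iff_norm] at h
    refine ne_of_lt (lt_of_le_of_lt (lintegral_mono fun ω => ?_) h)
    rw [norm_abs_eq_norm, Real.norm_eq_abs]
  have hfin' : ∫⁻ t, ENNReal.ofReal (eFun ν ρ t) ≠ ∞ := hkey ▸ hfin
  have hintE : Integrable (eFun ν ρ) volume := by
    refine ⟨(measurable_eFun ν ρ).aestronglyMeasurable, ?_⟩
    rw [hasFiniteIntegral_iff_norm]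
    refine lt_of_le_of_lt (le_of_eq (lintegral_congr fun t => ?_)) hfin'.lt_top
    rw [Real.norm_eq_abs, abs_of_nonneg (eFun_nonneg ν ρ t)]
  constructor
  · rw [integral_eq_lintegral_of_nonneg_ae (f := fun ω => |U ω - V ω|) (Eventually.of_forall fun ω => abs_nonneg _)
      ((hU.sub hV).abs.aestronglyMeasurable : AEStronglyMeasurable (fun ω => |U ω - V ω|) μ),
      integral_eq_lintegral_of_nonneg_ae (Eventually.of_forall fun t => eFun_nonneg ν ρ t)
      (measurable_eFun ν ρ).aestronglyMeasurable, hkey]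
  · exact hintE

lemma measure_eq_of_cdf_ae_eq (ν ρ : Measure ℝ) [IsProbabilityMeasure ν] [IsProbabilityMeasure ρ]
    (h : (fun t => (ν (Iic t)).toReal) =ᶠ[ae volume] (fun t => (ρ (Iic t)).toReal)) : ν = ρ := by
  apply MeasureTheory.Measure.eq_of_cdf
  have hbad : volume {t : ℝ | ¬ (ν (Iic t)).toReal = (ρ (Iic t)).toReal} = 0 := h
  ext1 t
  have hex : ∀ n : ℕ, ∃ s, s ∈ Ioo t (t + 1/(n+1)) ∧ (ν (Iic s)).toReal = (ρ (Iic s)).toReal := by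
    intro n
    by_contra hc
    push_neg at hc
    have hsub : Ioo t (t + 1/(n+1)) ⊆ {s : ℝ | ¬ (ν (Iic s)).toReal = (ρ (Iic s)).toReal} :=
      fun s hs => hc s hs
    have h0 : volume (Ioo t (t + 1/(n+1))) = 0 := measure_mono_null hsub hbad
    rw [Real.volume_Ioo] at h0
    have hpos : (0:ℝ) < 1/(n+1) := by positivity
    simp only [add_sub_cancel_left] at h0
    exact absurd h0 (by simp only [ENNReal.ofReal_eq_zero, not_le]; positivity)
  choose s hs1 hs2 using hex
  have hst : Tendsto s atTop (𝓝 t) := by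
    have hub : Tendsto (fun n : ℕ => t + 1/(n+1:ℝ)) atTop (𝓝 (t + 0)) :=
      tendsto_const_nhds.add (tendsto_one_div_add_atTop_nhds_zero_nat)
    rw [add_zero] at hub
    exact tendsto_of_tendsto_of_tendsto_of_le_of_le tendsto_const_nhds hub
      (fun n => (hs1 n).1.le) (fun n => (hs1 n).2.le)
  have hmem : ∀ n, s n ∈ Ici t := fun n => (hs1 n).1.le
  have hν : Tendsto (fun n => cdf ν (s n)) atTop (𝓝 (cdf ν t)) :=
    ((cdf ν).right_continuous t).tendsto.comp
      (tendsto_nhdsWithin_of_tendsto_nhds_of_eventually_within _ hst (Eventually.of_forall hmem))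
  have hρ : Tendsto (fun n => cdf ρ (s n)) atTop (𝓝 (cdf ρ t)) :=
    ((cdf ρ).right_continuous t).tendsto.comp
      (tendsto_nhdsWithin_of_tendsto_nhds_of_eventually_within _ hst (Eventually.of_forall hmem))
  have heq : (fun n => cdf ν (s n)) = fun n => cdf ρ (s n) := by
    funext n
    rw [cdf_eq_real, cdf_eq_real]
    exact hs2 n
  rw [heq] at hν
  exact tendsto_nhds_unique hν hρ

end EnergyDistanceAux

open EnergyDistanceAux

/-- **Nonnegativity and identity of indiscernibles for the energy distance.**
For integrable real random variables `X, Y`, with `X′` an independent copy of `X`, `Y′` an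
independent copy of `Y`, and `(X, X′)` independent of `(Y, Y′)`, the energy distance
`2 E|X − Y| − E|X − X′| − E|Y − Y′|` is nonnegative, and it is zero if and only if `X` and
`Y` have the same distribution. -/
theorem energy_distance_nonneg_and_eq_zero_iff
    {Ω : Type*} [MeasurableSpace Ω]
    (μ : Measure Ω) [IsProbabilityMeasure μ]
    (X X' Y Y' : Ω → ℝ)
    (hX : Measurable X) (hX' : Measurable X') (hY : Measurable Y) (hY' : Measurable Y')
    (hXint : Integrable X μ) (hYint : Integrable Y μ)
    -- `X'` is an independent copy of `X`, `Y'` an independent copy of `Y`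
    (hXid : IdentDistrib X X' μ μ) (hXindep : IndepFun X X' μ)
    (hYid : IdentDistrib Y Y' μ μ) (hYindep : IndepFun Y Y' μ)
    -- `(X, X')` independent of `(Y, Y')`
    (hXY : IndepFun (fun ω => (X ω, X' ω)) (fun ω => (Y ω, Y' ω)) μ) :
    0 ≤ 2 * ∫ ω, |X ω - Y ω| ∂μ - ∫ ω, |X ω - X' ω| ∂μ - ∫ ω, |Y ω - Y' ω| ∂μ
    ∧ (2 * ∫ ω, |X ω - Y ω| ∂μ - ∫ ω, |X ω - X' ω| ∂μ - ∫ ω, |Y ω - Y' ω| ∂μ = 0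
        ↔ μ.map X = μ.map Y) := by
  haveI hPν : IsProbabilityMeasure (μ.map X) := Measure.isProbabilityMeasure_map hX.aemeasurable
  haveI hPρ : IsProbabilityMeasure (μ.map Y) := Measure.isProbabilityMeasure_map hY.aemeasurable
  have hX'int : Integrable X' μ := hXid.integrable_iff.1 hXint
  have hY'int : Integrable Y' μ := hYid.integrable_iff.1 hYint
  have hindXY : IndepFun X Y μ := hXY.comp measurable_fst measurable_fst
  have h1 := step2 μ hX hY hindXY (hXint.sub hYint).abs (μ.map X) (μ.map Y) rfl rfl
  have h2 := step2 μ hX hX' hXindep (hXint.sub hX'int).abs (μ.map X) (μ.map X) rfl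
    hXid.map_eq.symm
  have h3 := step2 μ hY hY' hYindep (hYint.sub hY'int).abs (μ.map Y) (μ.map Y) rfl
    hYid.map_eq.symm
  set F : ℝ → ℝ := fun t => ((μ.map X) (Iic t)).toReal with hF
  set G : ℝ → ℝ := fun t => ((μ.map Y) (Iic t)).toReal with hG
  have hkey : (fun t => 2 * eFun (μ.map X) (μ.map Y) t - eFun (μ.map X) (μ.map X) t
      - eFun (μ.map Y) (μ.map Y) t) = fun t => 2 * (F t - G t)^2 := by
    funext t
    rw [eFun_eq, eFun_eq, eFun_eq, hF, hG]
    ring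
  have hq : Integrable (fun t => 2 * (F t - G t)^2) volume := by
    rw [← hkey]
    exact ((h1.2.const_mul 2).sub h2.2).sub h3.2
  have hEnergy : 2 * (∫ t, eFun (μ.map X) (μ.map Y) t) - (∫ t, eFun (μ.map X) (μ.map X) t)
      - (∫ t, eFun (μ.map Y) (μ.map Y) t) = ∫ t, 2 * (F t - G t)^2 := by
    have i12 : Integrable (fun t => 2 * eFun (μ.map X) (μ.map Y) t
        - eFun (μ.map X) (μ.map X) t) volume := (h1.2.const_mul 2).sub h2.2
    rw [← hkey, integral_sub i12 h3.2, integral_sub (h1.2.const_mul 2) h2.2,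
      integral_const_mul]
  rw [h1.1, h2.1, h3.1, hEnergy]
  constructor
  · exact integral_nonneg fun t => by positivity
  constructor
  · intro h0
    have hae := (integral_eq_zero_iff_of_nonneg (fun t => by positivity) hq).1 h0
    apply measure_eq_of_cdf_ae_eq
    filter_upwards [hae] with t ht
    have h2' : (F t - G t)^2 = 0 := by
      simpa using ht
    have : F t - G t = 0 := by
      exact pow_eq_zero_iff (two_ne_zero) |>.1 h2'
    have := sub_eq_zero.1 this
    simpa [hF, hG] using this
  · intro h
    have hFG : F = G := by
      funext t; rw [hF, hG, h]
    rw [hFG]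
    simp
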